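/- arXiv:2403.11940 — 2 statements merged into one kernel-verified Lean document; each statement's English description precedes it below -/
import Mathlib

section
/- Let G be a strongly connected, aperiodic directed graph on a finite vertex set with diameter at most D. Then for any vertex a and any integer n ≥ 2D², there exists a closed walk through a of length exactly n. -/
/-- There is a directed walk of length `k` from `u` to `v` along relation `R`. -/
def HasWalk {V : Type*} (R : V → V → Prop) (u v : V) (k : ℕ) : Prop :=
  ∃ f : ℕ → V, f 0 = u ∧ f k = v ∧ ∀ i < k, R (f i) (f (i + 1))

theorem hasWalk_zero {V : Type*} (R : V → V → Prop) (u : V) : HasWalk R u u 0 :=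
  ⟨fun _ => u, rfl, rfl, fun i h => absurd h (Nat.not_lt_zero i)⟩

theorem hasWalk_single {V : Type*} {R : V → V → Prop} {u v : V} (h : R u v) :
    HasWalk R u v 1 :=
  ⟨fun i => if i = 0 then u else v, by simp, by simp, by
    intro i hi
    have hi0 : i = 0 := by omega
    simp [hi0, h]⟩

theorem hasWalk_trans {V : Type*} {R : V → V → Prop} {u v w : V} {j k : ℕ}
    (h1 : HasWalk R u v j) (h2 : HasWalk R v w k) : HasWalk R u w (j + k) := by
  obtain ⟨f, hf0, hfj, hfs⟩ := h1
  obtain ⟨g, hg0, hgk, hgs⟩ := h2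
  refine ⟨fun i => if i < j then f i else g (i - j), ?_, ?_, ?_⟩
  · by_cases h : 0 < j
    · simp [h, hf0]
    · have hj : j = 0 := by omega
      have huv : u = v := by rw [← hf0, ← hfj, hj]
      simp only [if_neg (by omega : ¬ (0:ℕ) < j)]
      simpa [hg0] using huv.symm
  · have h : ¬ j + k < j := by omega
    simp only [h, if_false, Nat.add_sub_cancel_left, hgk]
  · intro i hi
    rcases lt_trichotomy (i + 1) j with h | h | h
    · have hij : i < j := by omega
      simp only [if_pos hij, if_pos h]
      exact hfs i hij
    · have hij : i < j := by omega
      have h2' : ¬ i + 1 < j := by omega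
      simp only [if_pos hij, if_neg h2']
      have e : i + 1 - j = 0 := by omega
      rw [e, hg0, ← hfj, ← h]
      exact hfs i hij
    · have h1' : ¬ i < j := by omega
      have h2' : ¬ i + 1 < j := by omega
      simp only [if_neg h1', if_neg h2']
      have e : i + 1 - j = (i - j) + 1 := by omega
      rw [e]
      exact hgs (i - j) (by omega)

/-- One BFS step in `ZMod L`: add each generator from `G` to each element. -/
def stepSet (L : ℕ) (G : Finset ℕ) (X : Finset (ZMod L)) : Finset (ZMod L) :=
  X ∪ G.biUnion (fun g => X.image (· + (g : ZMod L)))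

/-- Residues reachable as sums of at most `k` generators from `G`. -/
def reachSet (L : ℕ) (G : Finset ℕ) : ℕ → Finset (ZMod L)
  | 0 => {0}
  | k + 1 => stepSet L G (reachSet L G k)

theorem reachSet_spec (L : ℕ) (G : Finset ℕ) (M : ℕ) (P : ℕ → Prop)
    (hP0 : P 0) (hPadd : ∀ x y, P x → P y → P (x + y))
    (hG : ∀ g ∈ G, g ≤ M ∧ P g) :
    ∀ k, ∀ x ∈ reachSet L G k, ∃ B, P B ∧ B ≤ k * M ∧ (B : ZMod L) = x := by
  intro k
  induction k with
  | zero =>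
    intro x hx
    simp only [reachSet, Finset.mem_singleton] at hx
    exact ⟨0, hP0, by omega, by simp [hx]⟩
  | succ k ih =>
    intro x hx
    simp only [reachSet, stepSet, Finset.mem_union, Finset.mem_biUnion] at hx
    rcases hx with hx | ⟨g, hg, hx⟩
    · obtain ⟨B, h1, h2, h3⟩ := ih x hx
      exact ⟨B, h1, by nlinarith, h3⟩
    · simp only [Finset.mem_image] at hx
      obtain ⟨y, hy, hxy⟩ := hx
      obtain ⟨B, h1, h2, h3⟩ := ih y hy
      refine ⟨B + g, hPadd _ _ h1 (hG g hg).2, ?_, ?_⟩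
      · have := (hG g hg).1; nlinarith
      · push_cast
        rw [h3, hxy]

/-- In a finite, strongly connected, aperiodic directed graph of diameter at most `D`,
every vertex has a closed walk of every exact length `n ≥ 2D^2`. -/
theorem closed_walk_of_every_length {V : Type*} [Fintype V] (R : V → V → Prop) (D : ℕ)
    (hout : ∀ u : V, ∃ v, R u v)
    (hdiam : ∀ u v : V, ∃ k ≤ D, HasWalk R u v k)
    (haper : ∀ (a : V) (d : ℕ), (∀ k, 0 < k → HasWalk R a a k → d ∣ k) → d = 1)
    (a : V) (n : ℕ) (hn : 2 * D ^ 2 ≤ n) :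
    HasWalk R a a n := by
  classical
  have hS0 : HasWalk R a a 0 := hasWalk_zero R a
  obtain ⟨v0, hv0⟩ := hout a
  obtain ⟨k0, hk0D, hk0w⟩ := hdiam v0 a
  set L := k0 + 1 with hLdef
  have hSL : HasWalk R a a L := by
    have h := hasWalk_trans (hasWalk_single hv0) hk0w
    rwa [Nat.add_comm] at h
  choose p hpD hpW using fun v => hdiam a v
  choose q hqD hqW using fun v => hdiam v a
  -- Step 1: any d dividing all short closed-walk lengths divides all positive ones
  have hdvd : ∀ d : ℕ, (∀ g, 0 < g → g ≤ 2*D+1 → HasWalk R a a g → d ∣ g) →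
      ∀ m, 0 < m → HasWalk R a a m → d ∣ m := by
    intro d hG m hm hSm
    have hpv : ∀ v, (p v : ZMod d) = - (q v : ZMod d) := by
      intro v
      by_cases h : p v + q v = 0
      · have h1 : p v = 0 := by omega
        have h2 : q v = 0 := by omega
        simp [h1, h2]
      · have hdv : d ∣ p v + q v :=
          hG _ (by omega) (by have := hpD v; have := hqD v; omega)
            (hasWalk_trans (hpW v) (hqW v))
        have h0 : ((p v + q v : ℕ) : ZMod d) = 0 :=
          (ZMod.natCast_eq_zero_iff _ _).mpr hdv
        push_cast at h0
        linear_combination h0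
    have hedge : ∀ u w, R u w → (p w : ZMod d) = (p u : ZMod d) + 1 := by
      intro u w hR
      have hdv : d ∣ p u + 1 + q w :=
        hG _ (by omega) (by have := hpD u; have := hqD w; omega)
          (hasWalk_trans (hasWalk_trans (hpW u) (hasWalk_single hR)) (hqW w))
      have h0 : ((p u + 1 + q w : ℕ) : ZMod d) = 0 :=
        (ZMod.natCast_eq_zero_iff _ _).mpr hdv
      push_cast at h0
      linear_combination hpv w - h0
    obtain ⟨f, hf0, hfm, hfs⟩ := hSm
    have key : ∀ i, i ≤ m → (p (f i) : ZMod d) = (p a : ZMod d) + i := by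
      intro i
      induction i with
      | zero => intro _; simp [hf0]
      | succ i ih =>
        intro hi
        have h1 := ih (by omega)
        have h2 := hedge (f i) (f (i+1)) (hfs i (by omega))
        rw [h2, h1]
        push_cast
        ring
    have hm0 : ((m : ℕ) : ZMod d) = 0 := by
      have h := key m le_rfl
      rw [hfm] at h
      linear_combination -h
    exact (ZMod.natCast_eq_zero_iff _ _).mp hm0
  have hgcd : ∀ d : ℕ, (∀ g, 0 < g → g ≤ 2*D+1 → HasWalk R a a g → d ∣ g) → d = 1 :=
    fun d h => haper a d (fun k hk hw => hdvd d h k hk hw)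
  -- Step 2: the finset of short generators
  set G : Finset ℕ := (Finset.range (2*D+2)).filter (fun g => 0 < g ∧ HasWalk R a a g)
    with hGdef
  have hGmem : ∀ g, g ∈ G ↔ (g < 2*D+2 ∧ (0 < g ∧ HasWalk R a a g)) := by
    intro g
    simp [hGdef, Finset.mem_filter, Finset.mem_range]
  have hLG : L ∈ G := (hGmem L).mpr ⟨by omega, by omega, hSL⟩
  haveI : NeZero L := ⟨by omega⟩
  -- Step 3: BFS stabilizes within L steps
  have hmono : ∀ i, reachSet L G i ⊆ reachSet L G (i+1) := by
    intro i x hx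
    simp only [reachSet, stepSet, Finset.mem_union]
    exact Or.inl hx
  have hstab : ∃ j, j < L ∧ reachSet L G j = reachSet L G (j+1) := by
    by_contra hc
    push_neg at hc
    have hcard : ∀ i, i ≤ L → i + 1 ≤ (reachSet L G i).card := by
      intro i
      induction i with
      | zero => intro _; simp [reachSet]
      | succ i ih =>
        intro hi
        have h1 := ih (by omega)
        have hne := hc i (by omega)
        have hss : reachSet L G i ⊂ reachSet L G (i+1) := (hmono i).ssubset_of_ne hne
        have := Finset.card_lt_card hss
        omega
    have h1 := hcard L le_rfl
    have h2 : (reachSet L G L).card ≤ L := by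
      have := Finset.card_le_univ (reachSet L G L)
      rwa [ZMod.card L] at this
    omega
  obtain ⟨j, hjL, hj⟩ := hstab
  have hclose : ∀ g ∈ G, ∀ x ∈ reachSet L G j, x + (g : ZMod L) ∈ reachSet L G j := by
    intro g hg x hx
    rw [hj]
    simp only [reachSet, stepSet, Finset.mem_union]
    exact Or.inr (Finset.mem_biUnion.mpr ⟨g, hg, Finset.mem_image.mpr ⟨x, hx, rfl⟩⟩)
  have h0mem : ∀ i, (0 : ZMod L) ∈ reachSet L G i := by
    intro i
    induction i with
    | zero => simp [reachSet]
    | succ i ih =>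
      simp only [reachSet, stepSet, Finset.mem_union]
      exact Or.inl ih
  -- Step 4: the stabilizer subgroup
  let K : AddSubgroup (ZMod L) :=
    { carrier := {y | ∀ x ∈ reachSet L G j, x + y ∈ reachSet L G j}
      zero_mem' := by intro x hx; simpa using hx
      add_mem' := by
        intro y z hy hz x hx
        rw [← add_assoc]
        exact hz _ (hy _ hx)
      neg_mem' := by
        intro y hy x hx
        have himg : (reachSet L G j).image (· + y) = reachSet L G j := by
          apply Finset.eq_of_subset_of_card_le
          · intro z hz
            simp only [Finset.mem_image] at hz
            obtain ⟨w, hw, rfl⟩ := hz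
            exact hy w hw
          · rw [Finset.card_image_of_injective _ (add_left_injective y)]
        have hx' : x ∈ (reachSet L G j).image (· + y) := by rw [himg]; exact hx
        simp only [Finset.mem_image] at hx'
        obtain ⟨z, hz, hzx⟩ := hx'
        have hxz : x + -y = z := by rw [← hzx]; ring
        rw [hxz]
        exact hz }
  have hKmem : ∀ y : ZMod L, y ∈ K ↔ ∀ x ∈ reachSet L G j, x + y ∈ reachSet L G j :=
    fun y => Iff.rfl
  have hKG : ∀ g, g ∈ G → ((g : ℕ) : ZMod L) ∈ K :=
    fun g hg => (hKmem _).mpr (hclose g hg)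
  -- Step 5: minimal positive w with ↑w ∈ K divides members of G, hence is 1
  have hWex : ∃ w, 0 < w ∧ ((w : ℕ) : ZMod L) ∈ K := ⟨L, by omega, hKG L hLG⟩
  set d := Nat.find hWex with hddef
  have hd : 0 < d ∧ ((d : ℕ) : ZMod L) ∈ K := Nat.find_spec hWex
  have hdvdW : ∀ w : ℕ, (((w : ℕ) : ZMod L) ∈ K) → d ∣ w := by
    intro w hw
    by_contra hnd
    have hpos : 0 < w % d := Nat.pos_of_ne_zero (fun h0 => hnd (Nat.dvd_of_mod_eq_zero h0))
    have hlt : w % d < d := Nat.mod_lt _ hd.1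
    have hmem : ((w % d : ℕ) : ZMod L) ∈ K := by
      have hq : d * (w / d) + w % d = w := Nat.div_add_mod w d
      have hcast : ((w % d : ℕ) : ZMod L)
          = ((w : ℕ) : ZMod L) - (w / d) • ((d : ℕ) : ZMod L) := by
        have h := congrArg (fun t : ℕ => ((t : ℕ) : ZMod L)) hq
        push_cast at h
        push_cast [nsmul_eq_mul]
        linear_combination h
      rw [hcast]
      exact K.sub_mem hw (K.nsmul_mem hd.2 _)
    exact Nat.find_min hWex hlt ⟨hpos, hmem⟩
  have hd1 : d = 1 := by
    apply hgcd d
    intro g hg0 hgle hgw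
    exact hdvdW g (hKG g ((hGmem g).mpr ⟨by omega, hg0, hgw⟩))
  have h1K : ((1 : ℕ) : ZMod L) ∈ K := by rw [← hd1]; exact hd.2
  -- Step 6: K = ⊤, so the reach set at step j is everything
  have huniv : ∀ y : ZMod L, y ∈ reachSet L G j := by
    intro y
    have hyK : y ∈ K := by
      have h := K.nsmul_mem h1K (y.val)
      have hy : (y.val : ℕ) • ((1 : ℕ) : ZMod L) = y := by
        rw [nsmul_eq_mul]
        simp [ZMod.natCast_zmod_val]
      rwa [hy] at h
    have := (hKmem y).mp hyK 0 (h0mem j)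
    rwa [zero_add] at this
  -- Step 7: produce a representative B ≡ n (mod L) with controlled size
  obtain ⟨B, hBw, hBle, hBcast⟩ :=
    reachSet_spec L G (2*D+1) (fun m => HasWalk R a a m) hS0
      (fun x y hx hy => hasWalk_trans hx hy)
      (fun g hg => by rw [hGmem] at hg; exact ⟨by omega, hg.2.2⟩)
      j ((n : ℕ) : ZMod L) (huniv _)
  have hBbound : B ≤ 2*D^2 + k0 := by
    calc B ≤ j * (2*D+1) := hBle
    _ ≤ k0 * (2*D+1) := Nat.mul_le_mul_right _ (by omega)
    _ = 2*D*k0 + k0 := by ring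
    _ ≤ 2*D*D + k0 := by
        have := Nat.mul_le_mul_left (2*D) hk0D
        omega
    _ = 2*D^2 + k0 := by ring
  have hBlt : B < n + L := by
    have : 2*D^2 ≤ n := hn
    omega
  -- Step 8: conclude
  have hLt : ∀ t : ℕ, HasWalk R a a (L * t) := by
    intro t
    induction t with
    | zero => simpa using hS0
    | succ t ih =>
      have h := hasWalk_trans ih hSL
      rwa [show L * t + L = L * (t+1) by ring] at h
  rcases le_or_gt B n with hle | hlt
  · have hz : ((n - B : ℕ) : ZMod L) = 0 := by
      rw [Nat.cast_sub hle, hBcast]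
      ring
    obtain ⟨t, ht⟩ := (ZMod.natCast_eq_zero_iff _ _).mp hz
    have hEq : B + L * t = n := by
      rw [← ht]
      omega
    rw [← hEq]
    exact hasWalk_trans hBw (hLt t)
  · exfalso
    have hz : ((B - n : ℕ) : ZMod L) = 0 := by
      rw [Nat.cast_sub (le_of_lt hlt), hBcast]
      ring
    have hdvd2 := (ZMod.natCast_eq_zero_iff _ _).mp hz
    have h1 : 0 < B - n := by omega
    have := Nat.le_of_dvd h1 hdvd2
    omega
end

section
/- Let G be a strongly connected directed graph on a finite vertex set with period p, and suppose vertices a and b lie in the same cyclic class. Let D be an upper bound on the diameter of G. Then there exists a vertex c and an integer k ≤ 2D²/p + D such that there are directed walks of length exactly k from c to a and from c to b. In particular, k ≤ 2D² + D. -/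
set_option maxHeartbeats 1000000

section Aux
variable {V : Type*} {R : V → V → Prop}

theorem hasWalk_refl (R : V → V → Prop) (v : V) : HasWalk R v v 0 :=
  ⟨fun _ => v, rfl, rfl, fun i h => absurd h (Nat.not_lt_zero i)⟩

theorem hasWalk_single_s5 {x y : V} (h : R x y) : HasWalk R x y 1 := by
  refine ⟨fun i => if i = 0 then x else y, by simp, by simp, ?_⟩
  intro i hi
  have : i = 0 := by omega
  subst this
  simpa using h

theorem hasWalk_concat {u v w : V} {m n : ℕ}
    (h1 : HasWalk R u v m) (h2 : HasWalk R v w n) : HasWalk R u w (m + n) := by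
  obtain ⟨f, hf0, hfm, hfs⟩ := h1
  obtain ⟨g, hg0, hgn, hgs⟩ := h2
  refine ⟨fun i => if i < m then f i else g (i - m), ?_, ?_, ?_⟩
  · by_cases hm : 0 < m
    · simpa [hm] using hf0
    · have hm0 : m = 0 := by omega
      subst hm0
      simp only [Nat.lt_irrefl, if_false, Nat.sub_zero]
      rw [hg0, ← hfm, hf0]
  · have h1 : ¬ (m + n < m) := by omega
    simp only [h1, if_false, Nat.add_sub_cancel_left]
    exact hgn
  · intro i hi
    by_cases h2i : i + 1 < m
    · have h3 : i < m := by omega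
      simp only [h3, h2i, if_true]
      exact hfs i h3
    · by_cases h3 : i < m
      · have him : m = i + 1 := by omega
        subst him
        simp only [h3, h2i, if_true, if_false, Nat.sub_self]
        rw [hg0, ← hfm]
        exact hfs i h3
      · have h5 : i + 1 - m = (i - m) + 1 := by omega
        simp only [h3, h2i, if_false, h5]
        exact hgs (i - m) (by omega)

end Aux

theorem exists_x (c h N : ℕ) (hh : 0 < h) (hdvd : Nat.gcd c h ∣ N) :
    ∃ x : ℕ, x * Nat.gcd c h < h ∧ (h : ℤ) ∣ (N : ℤ) - x * c := by
  have hgpos : 0 < Nat.gcd c h := Nat.gcd_pos_of_pos_right c hh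
  obtain ⟨η, hη⟩ : Nat.gcd c h ∣ h := Nat.gcd_dvd_right c h
  have hηpos : 0 < η := by
    rcases Nat.eq_zero_or_pos η with h0 | h0
    · subst h0; simp at hη; omega
    · exact h0
  obtain ⟨c₁, hc₁⟩ : Nat.gcd c h ∣ c := Nat.gcd_dvd_left c h
  obtain ⟨t, ht⟩ := hdvd
  set A := Nat.gcdA c h with hA
  set B := Nat.gcdB c h with hB
  have hbez : (Nat.gcd c h : ℤ) = c * A + h * B := Nat.gcd_eq_gcd_ab c h
  set X : ℤ := (t * A) % (η : ℤ) with hX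
  have hηz : (0:ℤ) < η := by exact_mod_cast hηpos
  have hX0 : 0 ≤ X := Int.emod_nonneg _ (ne_of_gt hηz)
  have hXlt : X < (η:ℤ) := Int.emod_lt_of_pos _ hηz
  have hEq : (η:ℤ) * ((t*A) / η) = t*A - X := by
    have h9 := Int.mul_ediv_add_emod ((t:ℤ)*A) (η:ℤ)
    rw [hX]; linarith
  refine ⟨X.toNat, ?_, ?_⟩
  · have h1 : (X.toNat : ℤ) = X := Int.toNat_of_nonneg hX0
    have h2 : X.toNat < η := by
      have := hXlt; rw [← h1] at this; exact_mod_cast this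
    have h3 : (X.toNat + 1) * Nat.gcd c h ≤ η * Nat.gcd c h :=
      Nat.mul_le_mul_right _ h2
    nlinarith [hgpos]
  · have hXc : (X.toNat : ℤ) = X := Int.toNat_of_nonneg hX0
    rw [hXc]
    set q := ((t:ℤ)*A) / (η:ℤ) with hq
    refine ⟨c₁ * q + t * B, ?_⟩
    have hNz : (N:ℤ) = (Nat.gcd c h : ℤ) * t := by exact_mod_cast ht
    have hcz : (c:ℤ) = (Nat.gcd c h : ℤ) * c₁ := by exact_mod_cast hc₁
    have hhz : (h:ℤ) = (Nat.gcd c h : ℤ) * η := by exact_mod_cast hη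
    linear_combination (1:ℤ)*hNz + (t:ℤ)*hbez + (-(c₁:ℤ)*q)*hhz +
      (-(Nat.gcd c h : ℤ)*(c₁:ℤ))*hEq + ((t:ℤ)*A - X)*hcz

theorem nt_lemma (M a : ℕ) (A : Set ℕ) (haA : a ∈ A) (hapos : 0 < a) (haM : a ≤ M) :
    ∀ s : Finset ℕ, (∀ x ∈ s, x ∈ A ∧ 0 < x ∧ x ≤ M) →
    ∀ N : ℕ, (insert a s).gcd id ∣ N →
      (a / (insert a s).gcd id) * M + (insert a s).gcd id ≤ N + M + a →
      N ∈ AddSubmonoid.closure A := by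
  intro s
  induction s using Finset.induction_on with
  | empty =>
    intro _ N hdvd _
    have hga : (insert a (∅:Finset ℕ)).gcd id = a := by
      simp [Finset.gcd_insert, Finset.gcd_empty]
    rw [hga] at hdvd
    obtain ⟨t, rfl⟩ := hdvd
    have h1 : a ∈ AddSubmonoid.closure A := AddSubmonoid.subset_closure haA
    have h2 : t • a ∈ AddSubmonoid.closure A := nsmul_mem h1 t
    simpa [smul_eq_mul, Nat.mul_comm] using h2
  | @insert c s' hcns ih =>
    intro hmem N hdvd hbound
    have hcA : c ∈ A := (hmem c (Finset.mem_insert_self c s')).1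
    have hcpos : 0 < c := (hmem c (Finset.mem_insert_self c s')).2.1
    have hcM : c ≤ M := (hmem c (Finset.mem_insert_self c s')).2.2
    have hmem' : ∀ x ∈ s', x ∈ A ∧ 0 < x ∧ x ≤ M := fun x hx =>
      hmem x (Finset.mem_insert_of_mem hx)
    set h := (insert a s').gcd id with hhdef
    have hgcd_eq : (insert a (insert c s')).gcd id = Nat.gcd c h := by
      rw [Finset.insert_comm, Finset.gcd_insert]
      rfl
    set g := Nat.gcd c h with hgdef
    rw [hgcd_eq] at hdvd hbound
    have hha : h ∣ a := by
      have h9 := Finset.gcd_dvd (f := id) (s := insert a s') (Finset.mem_insert_self a s')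
      exact h9
    have hhpos : 0 < h := Nat.pos_of_dvd_of_pos hha hapos
    have hgh : g ∣ h := Nat.gcd_dvd_right c h
    have hgpos : 0 < g := Nat.gcd_pos_of_pos_right c hhpos
    by_cases heq : g = h
    · exact ih hmem' N (by rwa [← heq]) (by rwa [← heq])
    · have hglt : g < h := lt_of_le_of_ne (Nat.le_of_dvd hhpos hgh) heq
      obtain ⟨η, hηeq⟩ := hgh
      obtain ⟨θ, hθeq⟩ := hha
      have hη2 : 2 ≤ η := by
        by_contra hcon
        push_neg at hcon
        interval_cases η
        · simp at hηeq; omega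
        · simp at hηeq; exact heq hηeq.symm
      have hθ1 : 1 ≤ θ := by
        rcases Nat.eq_zero_or_pos θ with h0 | h0
        · subst h0; simp at hθeq; omega
        · exact h0
      have hag : a / g = η * θ := by
        have h9 : a = g * (η * θ) := by rw [hθeq, hηeq]; ring
        rw [h9, Nat.mul_div_cancel_left _ hgpos]
      have hah : a / h = θ := by
        rw [hθeq, Nat.mul_div_cancel_left _ hhpos]
      obtain ⟨x, hxg, hxdvd⟩ := exists_x c h N hhpos (by rwa [← hgdef])
      have hxη : x < η := by
        by_contra hcon
        push_neg at hcon
        have h9 : η * g ≤ x * g := Nat.mul_le_mul_right _ hcon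
        rw [← hgdef] at hxg
        nlinarith [hηeq]
      have hMa : h ≤ a := Nat.le_of_dvd hapos ⟨θ, hθeq⟩
      have hga' : g ≤ h := Nat.le_of_dvd hhpos ⟨η, hηeq⟩
      set Z : ℤ := (N:ℤ) - x * c with hZdef
      have hZdvd : (h:ℤ) ∣ Z := hxdvd
      have hxz : (x:ℤ) ≤ (η:ℤ) - 1 := by
        have : (x:ℤ) < (η:ℤ) := by exact_mod_cast hxη
        linarith
      have hxc_le : (x:ℤ) * c ≤ ((η:ℤ) - 1) * M := by
        have h2 : (c:ℤ) ≤ M := by exact_mod_cast hcM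
        have h3 : (0:ℤ) ≤ x := by positivity
        have h4 : (0:ℤ) ≤ c := by positivity
        nlinarith
      have hhz : (h:ℤ) = g * η := by exact_mod_cast hηeq
      have haz : (a:ℤ) = g * η * θ := by
        have h9 : a = g * η * θ := by rw [hθeq, hηeq]
        exact_mod_cast h9
      have hbz : ((η:ℤ) * θ) * M + g ≤ (N:ℤ) + M + (g:ℤ) * η * θ := by
        rw [hag] at hbound
        have h9 : ((η:ℤ) * θ) * M + g ≤ (N:ℤ) + M + a := by exact_mod_cast hbound
        rw [haz] at h9; exact h9
      have hMg : (g:ℤ) ≤ M := by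
        have h9 : g ≤ M := le_trans (le_trans hga' hMa) haM
        exact_mod_cast h9
      have hgz1 : (1:ℤ) ≤ g := by exact_mod_cast hgpos
      have hθz : (1:ℤ) ≤ θ := by exact_mod_cast hθ1
      have hηz : (2:ℤ) ≤ η := by exact_mod_cast hη2
      have hM0 : (0:ℤ) ≤ M := by positivity
      have hZpos : 0 ≤ Z := by
        have hint : 0 ≤ (η:ℤ) * ((θ:ℤ) - 1) * ((M:ℤ) - g) := by
          apply mul_nonneg (mul_nonneg (by linarith) (by linarith)) (by linarith)
        have hZgt : -(h:ℤ) < Z := by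
          rw [hZdef, hhz]
          nlinarith [hbz, hxc_le, hgz1]
        obtain ⟨m, hm⟩ := hZdvd
        rcases le_or_gt 0 m with h0 | h0
        · rw [hm]
          have : (0:ℤ) ≤ h := by positivity
          exact mul_nonneg this h0
        · exfalso
          have h9 : m ≤ -1 := by omega
          have hhz0 : (0:ℤ) < h := by exact_mod_cast hhpos
          nlinarith [hm, hZgt]
      set N' := Z.toNat with hN'def
      have hN'z : (N' : ℤ) = Z := Int.toNat_of_nonneg hZpos
      have hNsplit : N = N' + x * c := by
        have h9 : (N:ℤ) = (N':ℤ) + x * c := by rw [hN'z, hZdef]; ring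
        exact_mod_cast h9
      have hN'dvd : h ∣ N' := by
        have h9 : (h:ℤ) ∣ (N':ℤ) := by rw [hN'z]; exact hZdvd
        exact_mod_cast h9
      have hN'bound : (a / h) * M + h ≤ N' + M + a := by
        rw [hah]
        by_cases hθ1' : θ = 1
        · subst hθ1'
          simp only [Nat.mul_one] at hθeq
          omega
        · have hθ2 : (2:ℤ) ≤ θ := by
            have : 2 ≤ θ := by omega
            exact_mod_cast this
          have h6 : (N:ℤ) - ((η:ℤ)-1)*M ≤ (N':ℤ) := by
            rw [hN'z, hZdef]; linarith [hxc_le]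
          have hint : 0 ≤ ((η:ℤ)-1) * (((θ:ℤ)-1)*M - g) := by
            apply mul_nonneg (by linarith)
            nlinarith
          have goal : ((θ:ℤ)) * M + h ≤ (N':ℤ) + M + a := by
            rw [hhz, haz]
            nlinarith [hbz, h6, hint]
          exact_mod_cast goal
      have hrec := ih hmem' N' hN'dvd hN'bound
      have h1 : x • c ∈ AddSubmonoid.closure A :=
        nsmul_mem (AddSubmonoid.subset_closure hcA) x
      have h2 := AddSubmonoid.add_mem (AddSubmonoid.closure A) h1 hrec
      rw [hNsplit]
      simpa [smul_eq_mul, Nat.add_comm] using h2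
theorem vertex_real {V : Type*} [Fintype V] (R : V → V → Prop) (p D : ℕ) (hp : 0 < p)
    (hper1 : ∀ (a : V) (k : ℕ), 0 < k → HasWalk R a a k → p ∣ k)
    (hper2 : ∀ (a : V) (d : ℕ), (∀ k, 0 < k → HasWalk R a a k → d ∣ k) → d ∣ p)
    (dist : V → V → ℕ)
    (hdistD : ∀ u v, dist u v ≤ D)
    (hdistW : ∀ u v, HasWalk R u v (dist u v))
    (hdist0 : ∀ v, dist v v = 0)
    (hSC : ∀ u v : V, ∃ k, 0 < k ∧ HasWalk R u v k)
    (v : V) :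
    ∃ av : ℕ, 0 < av ∧ av ≤ D + 1 ∧ p ∣ av ∧
      ∀ N : ℕ, p ∣ N → (av / p) * (2*D+1) + p ≤ N + (2*D+1) + av → HasWalk R v v N := by
  classical
  set M := 2*D+1 with hM
  obtain ⟨k₀, hk₀pos, f₀, hf₀0, hf₀k, hf₀s⟩ := hSC v v
  set x := f₀ 1 with hx
  have hRvx : R v x := by
    have h9 := hf₀s 0 hk₀pos
    rwa [hf₀0] at h9
  set av := 1 + dist x v with hav
  have havwalk : HasWalk R v v av := hasWalk_concat (hasWalk_single_s5 hRvx) (hdistW x v)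
  have havpos : 0 < av := by omega
  have havle : av ≤ D + 1 := by have := hdistD x v; omega
  have hpav : p ∣ av := hper1 v av havpos havwalk
  set gens : Finset ℕ :=
    ((Finset.univ.filter (fun q : V × V => R q.1 q.2)).image
        (fun q : V × V => dist v q.1 + 1 + dist q.2 v) ∪
      Finset.univ.image (fun y : V => dist v y + dist y v)).filter (fun n => 0 < n)
    with hgens
  have hmemProp : ∀ n ∈ gens, 0 < n ∧ n ≤ M ∧ HasWalk R v v n := by
    intro n hn
    rw [hgens, Finset.mem_filter] at hn
    obtain ⟨hn1, hnpos⟩ := hn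
    refine ⟨hnpos, ?_⟩
    rcases Finset.mem_union.mp hn1 with h | h
    · obtain ⟨q, hq, hqn⟩ := Finset.mem_image.mp h
      have hR : R q.1 q.2 := (Finset.mem_filter.mp hq).2
      constructor
      · have h8 := hdistD v q.1; have h9 := hdistD q.2 v; omega
      · have w := hasWalk_concat (hdistW v q.1)
          (hasWalk_concat (hasWalk_single_s5 hR) (hdistW q.2 v))
        rw [← Nat.add_assoc] at w
        rw [← hqn]
        exact w
    · obtain ⟨y, _, hyn⟩ := Finset.mem_image.mp h
      constructor
      · have h8 := hdistD v y; have h9 := hdistD y v; omega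
      · rw [← hyn]; exact hasWalk_concat (hdistW v y) (hdistW y v)
  have hpdvd : ∀ n ∈ gens, p ∣ id n := fun n hn =>
    hper1 v n (hmemProp n hn).1 (hmemProp n hn).2.2
  set G := gens.gcd id with hG
  have hGdvdwalk : ∀ ℓ : ℕ, HasWalk R v v ℓ → G ∣ ℓ := by
    intro ℓ hw
    obtain ⟨f, hf0, hfl, hfs⟩ := hw
    have hE : ∀ i, i < ℓ → (G:ℤ) ∣ ((dist v (f i) : ℤ) + 1 + dist (f (i+1)) v) := by
      intro i hi
      have hmem : dist v (f i) + 1 + dist (f (i+1)) v ∈ gens := by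
        rw [hgens, Finset.mem_filter]
        constructor
        · apply Finset.mem_union_left
          apply Finset.mem_image.mpr
          exact ⟨(f i, f (i+1)), Finset.mem_filter.mpr ⟨Finset.mem_univ _, hfs i hi⟩, rfl⟩
        · omega
      have h9 : G ∣ dist v (f i) + 1 + dist (f (i+1)) v := Finset.gcd_dvd (f := id) hmem
      exact_mod_cast h9
    have hT : ∀ w : V, (G:ℤ) ∣ ((dist v w : ℤ) + dist w v) := by
      intro w
      by_cases h0 : dist v w + dist w v = 0
      · have h9 : (dist v w : ℤ) + dist w v = 0 := by exact_mod_cast h0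
        rw [h9]; exact dvd_zero _
      · have hmem : dist v w + dist w v ∈ gens := by
          rw [hgens, Finset.mem_filter]
          refine ⟨Finset.mem_union_right _ (Finset.mem_image.mpr ⟨w, Finset.mem_univ _, rfl⟩), by omega⟩
        have h9 : G ∣ dist v w + dist w v := Finset.gcd_dvd (f := id) hmem
        exact_mod_cast h9
    have key : (ℓ:ℤ) = ∑ i ∈ Finset.range ℓ, ((dist v (f i) : ℤ) + 1 - dist v (f (i+1))) := by
      have h1 : ∑ i ∈ Finset.range ℓ, ((dist v (f i) : ℤ) - dist v (f (i+1)))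
          = (dist v (f 0) : ℤ) - dist v (f ℓ) :=
        Finset.sum_range_sub' (fun i => (dist v (f i) : ℤ)) ℓ
      have h2 : ∑ i ∈ Finset.range ℓ, ((dist v (f i) : ℤ) + 1 - dist v (f (i+1)))
          = (∑ i ∈ Finset.range ℓ, ((dist v (f i) : ℤ) - dist v (f (i+1)))) + ℓ := by
        have h3 : ∀ i ∈ Finset.range ℓ, ((dist v (f i) : ℤ) + 1 - dist v (f (i+1)))
            = ((dist v (f i) : ℤ) - dist v (f (i+1))) + 1 := by intro i _; ring
        rw [Finset.sum_congr rfl h3, Finset.sum_add_distrib]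
        simp
      rw [h2, h1, hf0, hfl, hdist0 v]
      push_cast
      ring
    have hdvd9 : (G:ℤ) ∣ (ℓ:ℤ) := by
      rw [key]
      apply Finset.dvd_sum
      intro i hi
      have hiℓ : i < ℓ := Finset.mem_range.mp hi
      have e1 := hE i hiℓ
      have e2 := hT (f (i+1))
      have h9 : ((dist v (f i) : ℤ) + 1 - dist v (f (i+1)))
          = ((dist v (f i) : ℤ) + 1 + dist (f (i+1)) v)
            - ((dist v (f (i+1)) : ℤ) + dist (f (i+1)) v) := by ring
      rw [h9]
      exact dvd_sub e1 e2
    exact_mod_cast hdvd9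
  have hGp : G ∣ p := hper2 v G (fun ℓ hℓ hw => hGdvdwalk ℓ hw)
  have hpG : p ∣ G := Finset.dvd_gcd hpdvd
  have hGeq : G = p := Nat.dvd_antisymm hGp hpG
  have havmem : av ∈ gens := by
    rw [hgens, Finset.mem_filter]
    refine ⟨Finset.mem_union_left _ (Finset.mem_image.mpr
      ⟨(v, x), Finset.mem_filter.mpr ⟨Finset.mem_univ _, hRvx⟩, ?_⟩), by omega⟩
    rw [hdist0 v]
  refine ⟨av, havpos, havle, hpav, ?_⟩
  intro N hpN hbd
  have hgcd_ins : (insert av gens).gcd id = p := by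
    rw [Finset.insert_eq_self.mpr havmem, ← hG, hGeq]
  have hcl : N ∈ AddSubmonoid.closure (↑gens : Set ℕ) := by
    apply nt_lemma M av (↑gens : Set ℕ) (by exact_mod_cast havmem) havpos (by omega) gens
      (fun y hy => ⟨by exact_mod_cast hy, (hmemProp y hy).1, (hmemProp y hy).2.1⟩) N
    · rw [hgcd_ins]; exact hpN
    · rw [hgcd_ins]; exact hbd
  let S : AddSubmonoid ℕ :=
    { carrier := {n | HasWalk R v v n},
      zero_mem' := hasWalk_refl R v,
      add_mem' := fun h1 h2 => hasWalk_concat h1 h2 }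
  have h10 : AddSubmonoid.closure (↑gens : Set ℕ) ≤ S :=
    AddSubmonoid.closure_le.mpr (fun n hn => (hmemProp n hn).2.2)
  exact h10 hcl

theorem final_arith (D p M da db e L1 L2 k : ℤ)
    (hD : 1 ≤ D) (hp : 1 ≤ p) (hpD : p ≤ D + 1) (hM : M = 2*D+1)
    (hda1 : p ≤ da) (hda2 : da ≤ D+1) (hdb1 : p ≤ db) (hdb2 : db ≤ D+1)
    (he : 0 ≤ e) (heD : e ≤ D)
    (hL1 : p * L1 ≤ (da - p) * (M - p))
    (hL2 : p * L2 ≤ (db - p) * (M - p) + p * e)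
    (hk : k ≤ L1 + p - 1 ∨ k ≤ L2 + p - 1) :
    p * k ≤ 2*D^2 + D*p := by
  have hp0 : (0:ℤ) ≤ p := by linarith
  have hprod : (0:ℤ) ≤ (p - 1) * (3*D + 1 - 2*p) := by
    apply mul_nonneg (by linarith) (by linarith)
  have hpe : p * e ≤ p * D := mul_le_mul_of_nonneg_left heD hp0
  rcases hk with hk | hk
  · have hmul : p * k ≤ p * (L1 + p - 1) := mul_le_mul_of_nonneg_left hk hp0
    have hx1 : (0:ℤ) ≤ (D + 1 - da) * (M - p) :=
      mul_nonneg (by linarith) (by linarith)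
    nlinarith [hL1, hmul, hprod, hx1]
  · have hmul : p * k ≤ p * (L2 + p - 1) := mul_le_mul_of_nonneg_left hk hp0
    have hx1 : (0:ℤ) ≤ (D + 1 - db) * (M - p) :=
      mul_nonneg (by linarith) (by linarith)
    nlinarith [hL2, hmul, hprod, hx1, hpe]

theorem k_bound (D p k : ℕ) (hp : 0 < p) (h : p * k ≤ 2*D^2 + D*p) :
    k ≤ 2*D^2 + D := by
  by_contra hcon
  push_neg at hcon
  have h1 : p * (2*D^2 + D + 1) ≤ p * k := Nat.mul_le_mul_left _ (by omega)
  have h2 : 1 * (2*D^2 + 1) ≤ p * (2*D^2 + 1) := Nat.mul_le_mul_right _ hp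
  have h3 : p * (2*D^2 + D + 1) = p * (2*D^2 + 1) + p * D := by ring
  have h4 : p * D = D * p := Nat.mul_comm p D
  linarith

/-- In a finite strongly connected graph of period `p` and diameter at most `D`, two
vertices `a`, `b` in the same cyclic class have a common witness at distance
`k ≤ 2D^2/p + D` (in particular `k ≤ 2D^2 + D`). -/
theorem same_class_witness_distance {V : Type*} [Fintype V] (R : V → V → Prop)
    (p D : ℕ) (hp : 0 < p)
    (hSC : ∀ u v : V, ∃ k, 0 < k ∧ HasWalk R u v k)
    (hdiam : ∀ u v : V, ∃ k ≤ D, HasWalk R u v k)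
    (hper1 : ∀ (a : V) (k : ℕ), 0 < k → HasWalk R a a k → p ∣ k)
    (hper2 : ∀ (a : V) (d : ℕ), (∀ k, 0 < k → HasWalk R a a k → d ∣ k) → d ∣ p)
    (a b : V) (hsame : ∀ k, HasWalk R a b k → p ∣ k) :
    ∃ (c : V) (k : ℕ), p * k ≤ 2 * D ^ 2 + D * p ∧ k ≤ 2 * D ^ 2 + D ∧
      HasWalk R c a k ∧ HasWalk R c b k := by
  classical
  by_cases hD0 : D = 0
  · subst hD0
    obtain ⟨k0, hk0, hw⟩ := hdiam a b
    have hk00 : k0 = 0 := Nat.le_zero.mp hk0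
    subst hk00
    obtain ⟨f, hf0, hfk, _⟩ := hw
    have hab : a = b := by rw [← hf0, hfk]
    exact ⟨a, 0, by simp, by simp, hasWalk_refl R a, hab ▸ hasWalk_refl R a⟩
  have hD : 1 ≤ D := Nat.pos_of_ne_zero hD0
  have hdistex : ∀ u v : V, ∃ k, k ≤ D ∧ HasWalk R u v k ∧ (u = v → k = 0) := by
    intro u v
    by_cases huv : u = v
    · exact ⟨0, Nat.zero_le D, huv ▸ hasWalk_refl R u, fun _ => rfl⟩
    · obtain ⟨k, hk, hw⟩ := hdiam u v
      exact ⟨k, hk, hw, fun h => absurd h huv⟩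
  choose dist hdistD hdistW hdist0' using hdistex
  have hdist0 : ∀ v, dist v v = 0 := fun v => hdist0' v v rfl
  set M := 2*D+1 with hM
  obtain ⟨da, hdapos, hdale, hpda, hreala⟩ :=
    vertex_real R p D hp hper1 hper2 dist hdistD hdistW hdist0 hSC a
  obtain ⟨db, hdbpos, hdble, hpdb, hrealb⟩ :=
    vertex_real R p D hp hper1 hper2 dist hdistD hdistW hdist0 hSC b
  set e := dist a b with he
  have heD : e ≤ D := hdistD a b
  have hpe : p ∣ e := hsame e (hdistW a b)
  have hpda' : p ≤ da := Nat.le_of_dvd hdapos hpda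
  have hpdb' : p ≤ db := Nat.le_of_dvd hdbpos hpdb
  have hpD1 : p ≤ D + 1 := le_trans hpda' hdale
  obtain ⟨α, hα⟩ := hpda
  obtain ⟨β, hβ⟩ := hpdb
  have hda_div : da / p = α := by rw [hα, Nat.mul_div_cancel_left _ hp]
  have hdb_div : db / p = β := by rw [hβ, Nat.mul_div_cancel_left _ hp]
  set L1 := α * M + p - (M + da) with hL1
  set L2 := e + (β * M + p - (M + db)) with hL2
  set LB := max L1 L2 with hLB
  set k := LB + (p - LB % p) % p with hkdef
  have hpadlt : (p - LB % p) % p < p := Nat.mod_lt _ hp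
  have hkub : k < LB + p := by omega
  have hklb : LB ≤ k := by omega
  have hpk : p ∣ k := by
    have hdm := Nat.div_add_mod LB p
    rcases Nat.eq_zero_or_pos (LB % p) with h0 | h0
    · have h9 : k = LB := by rw [hkdef, h0]; simp
      rw [h9]
      exact Nat.dvd_of_mod_eq_zero h0
    · have hmlt : LB % p < p := Nat.mod_lt _ hp
      have hpad : (p - LB % p) % p = p - LB % p := Nat.mod_eq_of_lt (by omega)
      refine ⟨LB / p + 1, ?_⟩
      rw [hkdef, hpad, Nat.mul_add, Nat.mul_one]
      set t := p * (LB / p) with ht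
      omega
  have hL1k : L1 ≤ k := le_trans (le_max_left _ _) hklb
  have hL2k : L2 ≤ k := le_trans (le_max_right _ _) hklb
  -- walk a -> a of length k
  have wa : HasWalk R a a k := by
    apply hreala k hpk
    rw [hda_div, ← hM]
    set u1 := α * M with hu1
    omega
  -- walk a -> b of length k
  have hek : e ≤ k := le_trans (Nat.le_add_right e _) hL2k
  have hwb : HasWalk R b b (k - e) := by
    apply hrealb (k - e) (Nat.dvd_sub hpk hpe)
    rw [hdb_div, ← hM]
    set u2 := β * M with hu2
    omega
  have wab : HasWalk R a b k := by
    have h9 := hasWalk_concat (hdistW a b) hwb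
    rwa [Nat.add_sub_cancel' hek] at h9
  -- arithmetic bounds
  have hMz : (M:ℤ) = 2*(D:ℤ)+1 := by exact_mod_cast hM
  have hpz1 : (1:ℤ) ≤ (p:ℤ) := by exact_mod_cast hp
  have hpD1z : (p:ℤ) ≤ (D:ℤ) + 1 := by exact_mod_cast hpD1
  have hDz : (1:ℤ) ≤ (D:ℤ) := by exact_mod_cast hD
  have hdaz : (p:ℤ) ≤ (da:ℤ) := by exact_mod_cast hpda'
  have hdbz : (p:ℤ) ≤ (db:ℤ) := by exact_mod_cast hpdb'
  have hdaDz : (da:ℤ) ≤ (D:ℤ) + 1 := by exact_mod_cast hdale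
  have hdbDz : (db:ℤ) ≤ (D:ℤ) + 1 := by exact_mod_cast hdble
  have heDz : (e:ℤ) ≤ (D:ℤ) := by exact_mod_cast heD
  have hMpz : (p:ℤ) ≤ (M:ℤ) := by rw [hMz]; linarith
  have hL1z : (p:ℤ) * L1 ≤ ((da:ℤ) - p) * ((M:ℤ) - p) := by
    rcases le_or_gt (α * M + p) (M + da) with hle | hlt
    · have h9 : L1 = 0 := by rw [hL1]; exact Nat.sub_eq_zero_of_le hle
      rw [h9]
      have : (0:ℤ) ≤ ((da:ℤ) - p) * ((M:ℤ) - p) :=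
        mul_nonneg (by linarith) (by linarith)
      simpa using this
    · have h8 : (M + da) ≤ α * M + p := le_of_lt hlt
      have h9 : (L1:ℤ) = (α:ℤ) * M + p - ((M:ℤ) + da) := by
        rw [hL1]
        push_cast [Nat.cast_sub h8]
        ring
      have hαz : (da:ℤ) = p * α := by exact_mod_cast hα
      rw [h9]
      have : (p:ℤ) * ((α:ℤ) * M + p - ((M:ℤ) + da)) = ((da:ℤ) - p) * ((M:ℤ) - p) := by
        linear_combination (-(M:ℤ)) * hαz
      rw [this]
  have hT2z : (p:ℤ) * ((β * M + p - (M + db) : ℕ) : ℤ) ≤ ((db:ℤ) - p) * ((M:ℤ) - p) := by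
    rcases le_or_gt (β * M + p) (M + db) with hle | hlt
    · have h9 : (β * M + p - (M + db) : ℕ) = 0 := Nat.sub_eq_zero_of_le hle
      rw [h9]
      have : (0:ℤ) ≤ ((db:ℤ) - p) * ((M:ℤ) - p) :=
        mul_nonneg (by linarith) (by linarith)
      simpa using this
    · have h8 : (M + db) ≤ β * M + p := le_of_lt hlt
      have h9 : ((β * M + p - (M + db) : ℕ) : ℤ) = (β:ℤ) * M + p - ((M:ℤ) + db) := by
        push_cast [Nat.cast_sub h8]
        ring
      have hβz : (db:ℤ) = p * β := by exact_mod_cast hβ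
      rw [h9]
      have : (p:ℤ) * ((β:ℤ) * M + p - ((M:ℤ) + db)) = ((db:ℤ) - p) * ((M:ℤ) - p) := by
        linear_combination (-(M:ℤ)) * hβz
      rw [this]
  have hL2z : (p:ℤ) * L2 ≤ ((db:ℤ) - p) * ((M:ℤ) - p) + (p:ℤ) * e := by
    have h9 : (L2:ℤ) = (e:ℤ) + ((β * M + p - (M + db) : ℕ) : ℤ) := by
      rw [hL2]; push_cast; ring
    calc (p:ℤ) * ((e:ℤ) + ((β * M + p - (M + db) : ℕ) : ℤ))
        = (p:ℤ) * ((β * M + p - (M + db) : ℕ) : ℤ) + (p:ℤ) * e := by ring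
      _ ≤ ((db:ℤ) - p) * ((M:ℤ) - p) + (p:ℤ) * e := by linarith [hT2z]
  have hfin : (p:ℤ) * k ≤ 2*(D:ℤ)^2 + (D:ℤ)*p := by
    apply final_arith (D:ℤ) (p:ℤ) (M:ℤ) (da:ℤ) (db:ℤ) (e:ℤ) (L1:ℤ) (L2:ℤ) (k:ℤ)
      hDz hpz1 hpD1z hMz hdaz hdaDz hdbz hdbDz (Int.natCast_nonneg e) heDz hL1z hL2z
    rcases max_cases L1 L2 with ⟨h1, h2⟩ | ⟨h1, h2⟩
    · left
      have h9 : k ≤ L1 + p - 1 := by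
        have h10 := hkub; rw [hLB, h1] at h10; omega
      have h10 : (k:ℤ) ≤ ((L1 + p - 1 : ℕ):ℤ) := by exact_mod_cast h9
      have h12 : 1 ≤ L1 + p := by omega
      have h11 : ((L1 + p - 1 : ℕ):ℤ) = (L1:ℤ) + p - 1 := by
        push_cast [Nat.cast_sub h12]
        ring
      linarith [h10, h11.le]
    · right
      have h9 : k ≤ L2 + p - 1 := by
        have h10 := hkub; rw [hLB, h1] at h10; omega
      have h10 : (k:ℤ) ≤ ((L2 + p - 1 : ℕ):ℤ) := by exact_mod_cast h9
      have h12 : 1 ≤ L2 + p := by omega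
      have h11 : ((L2 + p - 1 : ℕ):ℤ) = (L2:ℤ) + p - 1 := by
        push_cast [Nat.cast_sub h12]
        ring
      linarith [h10, h11.le]
  have hbound1 : p * k ≤ 2 * D ^ 2 + D * p := by exact_mod_cast hfin
  have hbound2 : k ≤ 2 * D ^ 2 + D := k_bound D p k hp hbound1
  exact ⟨a, k, hbound1, hbound2, wa, wab⟩
end
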